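/- For μ > 1, the Turán type inequality ζ(μ)·ζ(μ+2) ≥ ζ(μ+1)² is sharper than the Laforgia–Natalini bound: ζ(μ+1)² ≥ (μ/(μ+1))·ζ(μ+1)², hence ζ(μ)·ζ(μ+2) ≥ (μ/(μ+1))·ζ(μ+1)². -/

import Mathlib

open Real

noncomputable def mathieuS (μ r : ℝ) : ℝ :=
  ∑' n : ℕ, (2 * ((n : ℝ) + 1)) / ((((n : ℝ) + 1) ^ 2 + r ^ 2) ^ (μ + 1))

noncomputable def zetaR (s : ℝ) : ℝ := ∑' n : ℕ, ((n : ℝ) + 1) ^ (-s)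

lemma zetaR_summable {s : ℝ} (hs : 1 < s) :
    Summable (fun n : ℕ => ((n : ℝ) + 1) ^ (-s)) := by
  have := (Real.summable_one_div_nat_add_rpow 1 s).mpr hs
  refine this.congr fun n => ?_
  have h1 : (0:ℝ) ≤ (n : ℝ) + 1 := by positivity
  rw [abs_of_nonneg h1, one_div, ← Real.rpow_neg h1]

lemma zetaR_nonneg (s : ℝ) : 0 ≤ zetaR s :=
  tsum_nonneg fun n => Real.rpow_nonneg (by positivity) _

theorem stmt19 (μ : ℝ) (hμ : 1 < μ) :
    zetaR μ * zetaR (μ + 2) ≥ zetaR (μ + 1) ^ 2 ∧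
    zetaR (μ + 1) ^ 2 ≥ (μ / (μ + 1)) * zetaR (μ + 1) ^ 2 ∧
    zetaR μ * zetaR (μ + 2) ≥ (μ / (μ + 1)) * zetaR (μ + 1) ^ 2 := by
  have hpq : Real.HolderConjugate 2 2 := by
    rw [Real.holderConjugate_iff]; norm_num
  set f : ℕ → ℝ := fun n => ((n : ℝ) + 1) ^ (-(μ/2)) with hf
  set g : ℕ → ℝ := fun n => ((n : ℝ) + 1) ^ (-((μ+2)/2)) with hg
  have hb : ∀ n : ℕ, (0:ℝ) ≤ (n : ℝ) + 1 := fun n => by positivity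
  have hf2 : ∀ n, f n ^ (2:ℝ) = ((n : ℝ) + 1) ^ (-μ) := fun n => by
    rw [hf, ← Real.rpow_mul (hb n)]; ring_nf
  have hg2 : ∀ n, g n ^ (2:ℝ) = ((n : ℝ) + 1) ^ (-(μ+2)) := fun n => by
    rw [hg, ← Real.rpow_mul (hb n)]; ring_nf
  have hfg : ∀ n, f n * g n = ((n : ℝ) + 1) ^ (-(μ+1)) := fun n => by
    rw [hf, hg, ← Real.rpow_add (lt_of_lt_of_le zero_lt_one (by linarith [Nat.cast_nonneg (α := ℝ) n]))]
    ring_nf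
  have hsf : Summable fun n => f n ^ (2:ℝ) := by
    simp only [hf2]; exact zetaR_summable hμ
  have hsg : Summable fun n => g n ^ (2:ℝ) := by
    simp only [hg2]; exact zetaR_summable (by linarith)
  have key := inner_le_Lp_mul_Lq_tsum_of_nonneg (f := f) (g := g) hpq
    (fun n => Real.rpow_nonneg (hb n) _) (fun n => Real.rpow_nonneg (hb n) _) hsf hsg
  simp only [hfg, hf2, hg2] at key
  have h1 : zetaR (μ + 1) ^ 2 ≤ zetaR μ * zetaR (μ + 2) := by
    have hz : zetaR (μ+1) ≤ (zetaR μ) ^ ((1:ℝ)/2) * (zetaR (μ+2)) ^ ((1:ℝ)/2) := key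
    calc zetaR (μ + 1) ^ 2 ≤ ((zetaR μ) ^ ((1:ℝ)/2) * (zetaR (μ+2)) ^ ((1:ℝ)/2)) ^ 2 := by
          apply pow_le_pow_left₀ (zetaR_nonneg _) hz
      _ = zetaR μ * zetaR (μ + 2) := by
          rw [mul_pow, ← Real.rpow_natCast ((zetaR μ) ^ ((1:ℝ)/2)) 2,
            ← Real.rpow_natCast ((zetaR (μ+2)) ^ ((1:ℝ)/2)) 2,
            ← Real.rpow_mul (zetaR_nonneg _), ← Real.rpow_mul (zetaR_nonneg _)]
          norm_num
  have h2 : (μ / (μ + 1)) * zetaR (μ + 1) ^ 2 ≤ zetaR (μ + 1) ^ 2 := by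
    have : μ / (μ + 1) ≤ 1 := by
      rw [div_le_one (by linarith)]; linarith
    nlinarith [sq_nonneg (zetaR (μ+1))]
  exact ⟨h1, h2, le_trans h2 h1⟩
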